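/- Let Φ : ℝⁿ → (-∞,∞] be a proper lower semicontinuous convex function, written as Φ(y) = sup over (α,b) in a nonempty set S ⊂ ℝ × ℝⁿ of (α + b·y). Let ψ : [0,∞) → [0,∞) satisfy ψ(t)/t → ∞ as t → ∞. Then the function φ̃(x,y) := sup over (α,b) ∈ S of (α + b·y − ψ(|α|+|b|)·x) is finite for every x > 0 and y ∈ ℝⁿ. -/
import Mathlib


open scoped RealInnerProductSpace

theorem sup_extension_finite (n : ℕ) (Φ : EuclideanSpace ℝ (Fin n) → EReal)
    (S : Set (ℝ × EuclideanSpace ℝ (Fin n))) (hS : S.Nonempty)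
    (hbot : ∀ y, Φ y ≠ ⊥) (hproper : ∃ y, Φ y ≠ ⊤)
    (hlsc : LowerSemicontinuous Φ)
    (hconv : ∀ y z : EuclideanSpace ℝ (Fin n), ∀ a b : ℝ, 0 ≤ a → 0 ≤ b → a + b = 1 →
      Φ (a • y + b • z) ≤ (a : EReal) * Φ y + (b : EReal) * Φ z)
    (hrep : ∀ y, Φ y = ⨆ p ∈ S, ((p.1 + ⟪p.2, y⟫ : ℝ) : EReal))
    (ψ : ℝ → ℝ) (hψnonneg : ∀ t, 0 ≤ t → 0 ≤ ψ t)
    (hψ : Filter.Tendsto (fun t => ψ t / t) Filter.atTop Filter.atTop) :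
    ∀ x : ℝ, 0 < x → ∀ y : EuclideanSpace ℝ (Fin n),
      (⨆ p ∈ S, ((p.1 + ⟪p.2, y⟫ - ψ (|p.1| + ‖p.2‖) * x : ℝ) : EReal)) < ⊤ := by
  intro x hx y
  set C : ℝ := (1 + ‖y‖) / x with hC
  obtain ⟨M₀, hM₀⟩ := Filter.eventually_atTop.1 ((Filter.tendsto_atTop.1 hψ) C)
  set M : ℝ := max M₀ 1 with hM
  have hM1 : (1 : ℝ) ≤ M := le_max_right _ _
  have hKbound : ∀ p ∈ S,
      ((p.1 + ⟪p.2, y⟫ - ψ (|p.1| + ‖p.2‖) * x : ℝ) : EReal) ≤ ((M * (1 + ‖y‖) : ℝ) : EReal) := by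
    intro p _
    rw [EReal.coe_le_coe_iff]
    set t : ℝ := |p.1| + ‖p.2‖ with ht
    have ht0 : 0 ≤ t := add_nonneg (abs_nonneg _) (norm_nonneg _)
    have hlin : p.1 + ⟪p.2, y⟫ ≤ t * (1 + ‖y‖) := by
      have h1 : p.1 ≤ |p.1| := le_abs_self _
      have h2 : ⟪p.2, y⟫ ≤ ‖p.2‖ * ‖y‖ := real_inner_le_norm _ _
      nlinarith [abs_nonneg p.1, norm_nonneg p.2, norm_nonneg y]
    have hy0 : (0 : ℝ) ≤ 1 + ‖y‖ := by positivity
    by_cases hcase : M ≤ t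
    · have hψt : C ≤ ψ t / t := hM₀ t (le_trans (le_max_left _ _) hcase)
      have htpos : 0 < t := lt_of_lt_of_le (by linarith) hcase
      rw [hC, div_le_div_iff₀ hx htpos] at hψt
      have hMnn : 0 ≤ M * (1 + ‖y‖) := mul_nonneg (by linarith) hy0
      nlinarith
    · push_neg at hcase
      have hψ0 : 0 ≤ ψ t := hψnonneg t ht0
      nlinarith
  refine lt_of_le_of_lt (iSup₂_le hKbound) (EReal.coe_lt_top _)
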